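/- Let $m$ be prime, $\mathcal{C}\subseteq\mathbb{F}_{q^m}^n$ a linear code with systematic generator matrix $G=[I_k|A]$, and suppose some entry of $A$ lies in $\mathbb{F}_{q^m}\setminus\mathbb{F}_q$. If an $\mathbb{F}_q$-linear automorphism $\varphi$ of $\mathbb{F}_{q^m}$ satisfies that $\varphi(\mathcal{C})$ is $\mathbb{F}_{q^m}$-linear, then $\varphi$ is fully linear over $\mathbb{F}_{q^m}$. -/

import Mathlib

/-- An `𝔽_q`-linear automorphism `φ` of `𝔽_{q^m}` is *fully linear* if for every
`n`, the componentwise image of every `𝔽_{q^m}`-linear code in `𝔽_{q^m}ⁿ` is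
again `𝔽_{q^m}`-linear. -/
def FullyLinear (Fq Fqm : Type) [Field Fq] [Field Fqm] [Algebra Fq Fqm]
    (φ : Fqm ≃ₗ[Fq] Fqm) : Prop :=
  ∀ (n : ℕ) (C : Submodule Fqm (Fin n → Fqm)),
    ∃ D : Submodule Fqm (Fin n → Fqm),
      (fun v : Fin n → Fqm => fun i => φ (v i)) '' (C : Set (Fin n → Fqm)) = D

/-- Let `m` be prime and `𝒞` the row span of a systematic generator matrix
`G = [I_k | A]` over `𝔽_{q^m}` where some entry of `A` lies in
`𝔽_{q^m} \ 𝔽_q`.  If an `𝔽_q`-linear automorphism `φ` of `𝔽_{q^m}` maps `𝒞`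
to an `𝔽_{q^m}`-linear code, then `φ` is fully linear. -/
theorem fullyLinear_of_image_linear_of_prime_degree
    (q m k l : ℕ) (Fq Fqm : Type) [Field Fq] [Fintype Fq] [Field Fqm]
    [Algebra Fq Fqm] (hq : Fintype.card Fq = q) (hmp : m.Prime)
    (hrank : Module.finrank Fq Fqm = m)
    (A : Matrix (Fin k) (Fin l) Fqm) (i₀ : Fin k) (j₀ : Fin l)
    (hα : A i₀ j₀ ∉ Set.range (algebraMap Fq Fqm))
    (φ : Fqm ≃ₗ[Fq] Fqm)
    (hφ : ∃ D : Submodule Fqm (Fin (k + l) → Fqm),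
      (fun v : Fin (k + l) → Fqm => fun i => φ (v i)) ''
          (Submodule.span Fqm (Set.range fun i : Fin k =>
            Fin.append (fun j : Fin k => if j = i then (1 : Fqm) else 0)
              (fun j : Fin l => A i j)) : Set (Fin (k + l) → Fqm))
        = D) :
    FullyLinear Fq Fqm φ := by
  classical
  obtain ⟨D, hD⟩ := hφ
  set α := A i₀ j₀ with hαdef
  set r : Fin k → Fin (k + l) → Fqm := fun i =>
    Fin.append (fun j : Fin k => if j = i then (1 : Fqm) else 0)
      (fun j : Fin l => A i j) with hrdef
  have hφ0 : φ 0 = 0 := map_zero φ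
  have hφ1 : (φ 1 : Fqm) ≠ 0 := fun h => one_ne_zero (φ.injective (h.trans hφ0.symm))
  -- key extraction from the hypothesis
  have key : ∀ c : Fqm, ∃ t : Fqm, φ t = c * φ 1 ∧ φ (t * α) = c * φ α := by
    intro c
    have hr0 : r i₀ ∈ Submodule.span Fqm (Set.range r) :=
      Submodule.subset_span (Set.mem_range_self i₀)
    have himg : (fun i => φ (r i₀ i)) ∈ (D : Set (Fin (k + l) → Fqm)) := by
      rw [← hD]; exact ⟨r i₀, hr0, rfl⟩
    have hsm : c • (fun i => φ (r i₀ i)) ∈ (D : Set (Fin (k + l) → Fqm)) :=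
      D.smul_mem c himg
    rw [← hD] at hsm
    obtain ⟨v, hv, hve⟩ := hsm
    obtain ⟨t, ht⟩ := (Submodule.mem_span_range_iff_exists_fun Fqm).mp hv
    have hcoord : ∀ p, φ (v p) = c * φ (r i₀ p) := by
      intro p
      have := congrFun hve p
      simpa using this
    have hvl : ∀ j : Fin k, v (Fin.castAdd l j) = t j := by
      intro j
      rw [← ht]
      simp [hrdef, Finset.sum_apply, Fin.append_left, mul_ite]
    have hvr : v (Fin.natAdd k j₀) = ∑ i, t i * A i j₀ := by
      rw [← ht]
      simp [hrdef, Finset.sum_apply, Fin.append_right]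
    have htj : ∀ j, j ≠ i₀ → t j = 0 := by
      intro j hj
      have h1 := hcoord (Fin.castAdd l j)
      rw [hvl j] at h1
      have h2 : r i₀ (Fin.castAdd l j) = 0 := by
        simp [hrdef, Fin.append_left, hj]
      rw [h2, hφ0, mul_zero] at h1
      exact φ.injective (h1.trans hφ0.symm)
    have hti : φ (t i₀) = c * φ 1 := by
      have h1 := hcoord (Fin.castAdd l i₀)
      rw [hvl i₀] at h1
      simpa [hrdef, Fin.append_left] using h1
    have hsum : ∑ i, t i * A i j₀ = t i₀ * α := by
      rw [Finset.sum_eq_single i₀]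
      · intro b _ hb; rw [htj b hb, zero_mul]
      · intro h; exact absurd (Finset.mem_univ i₀) h
    refine ⟨t i₀, hti, ?_⟩
    have h2 := hcoord (Fin.natAdd k j₀)
    rw [hvr, hsum] at h2
    simpa [hrdef, Fin.append_right] using h2
  set σ : Fqm → Fqm := fun s => φ s / φ 1 with hσdef
  have hσ1 : ∀ s, σ s * φ 1 = φ s := fun s => by
    simp only [hσdef]; field_simp
  have keyα : ∀ s : Fqm, φ (s * α) = σ s * φ α := by
    intro s
    obtain ⟨t, ht1, ht2⟩ := key (φ s / φ 1)
    have hts : t = s := φ.injective (by rw [ht1]; field_simp)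
    rw [hts] at ht2
    rw [ht2, hσdef]
  -- the set of elements on which φ is "semilinear" is an Fq-subalgebra
  let S : Subalgebra Fq Fqm :=
    { carrier := {x : Fqm | ∀ s : Fqm, φ (s * x) = σ s * φ x}
      mul_mem' := by
        intro x y hx hy s
        have h1 : φ (s * (x * y)) = σ (s * x) * φ y := by
          rw [show s * (x * y) = (s * x) * y by ring]; exact hy _
        have h2 : σ (s * x) = σ s * σ x := by
          simp only [hσdef]; rw [hx s, mul_div_assoc]
        rw [h1, h2, hy x, mul_assoc]
      one_mem' := by intro s; rw [mul_one, hσ1]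
      add_mem' := by
        intro x y hx hy s
        rw [show s * (x + y) = s * x + s * y by ring, map_add, map_add, hx, hy, mul_add]
      zero_mem' := by intro s; simp
      algebraMap_mem' := by
        intro a s
        rw [show s * algebraMap Fq Fqm a = a • s by rw [Algebra.smul_def, mul_comm],
          show (algebraMap Fq Fqm a : Fqm) = a • (1 : Fqm) by rw [Algebra.smul_def, mul_one],
          map_smul, map_smul, mul_smul_comm, hσ1] }
  have hαS : α ∈ S := keyα
  have hfin : FiniteDimensional Fq Fqm :=
    Module.finite_of_finrank_pos (by rw [hrank]; exact hmp.pos)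
  have hint : IsIntegral Fq α := IsIntegral.of_finite Fq α
  have hSmem : ∀ x : Fqm, x ∈ S := by
    intro x
    have hdvd : Module.finrank Fq (IntermediateField.adjoin Fq {α}) ∣ m :=
      ⟨Module.finrank (IntermediateField.adjoin Fq {α}) Fqm, by
        rw [← hrank, ← Module.finrank_mul_finrank Fq (IntermediateField.adjoin Fq {α}) Fqm]⟩
    rcases hmp.eq_one_or_self_of_dvd _ hdvd with h1 | hm
    · exfalso
      have hbot : IntermediateField.adjoin Fq {α} = ⊥ :=
        IntermediateField.finrank_eq_one_iff.mp h1
      have hmem : α ∈ IntermediateField.adjoin Fq {α} :=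
        IntermediateField.mem_adjoin_simple_self Fq α
      rw [hbot, IntermediateField.mem_bot] at hmem
      exact hα hmem
    · have htop : IntermediateField.adjoin Fq {α} = ⊤ := by
        apply IntermediateField.eq_of_le_of_finrank_le le_top
        rw [IntermediateField.finrank_top', hrank, hm]
      have hx1 : x ∈ IntermediateField.adjoin Fq {α} := by
        rw [htop]; exact IntermediateField.mem_top
      have hx2 : x ∈ Algebra.adjoin Fq ({α} : Set Fqm) := by
        rw [← IntermediateField.adjoin_simple_toSubalgebra_of_isAlgebraic hint.isAlgebraic]
        exact hx1
      exact Algebra.adjoin_le (Set.singleton_subset_iff.mpr hαS) hx2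
  have hmulall : ∀ s x : Fqm, φ (s * x) = σ s * φ x := fun s x => hSmem x s
  have hσsurj : ∀ c : Fqm, ∃ d, σ d = c := by
    intro c
    refine ⟨φ.symm (c * φ 1), ?_⟩
    simp only [hσdef, φ.apply_symm_apply]
    field_simp
  intro n C
  refine ⟨{ carrier := (fun v : Fin n → Fqm => fun i => φ (v i)) '' (C : Set (Fin n → Fqm))
            add_mem' := ?_
            zero_mem' := ?_
            smul_mem' := ?_ }, rfl⟩
  · rintro a b ⟨u, hu, rfl⟩ ⟨v, hv, rfl⟩
    exact ⟨u + v, C.add_mem hu hv, by funext i; simp⟩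
  · exact ⟨0, C.zero_mem, by funext i; simp⟩
  · rintro c x ⟨v, hv, rfl⟩
    obtain ⟨d, hd⟩ := hσsurj c
    refine ⟨d • v, C.smul_mem d hv, ?_⟩
    funext i
    simp only [Pi.smul_apply, smul_eq_mul]
    rw [hmulall d (v i), hd]
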